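/- (Existence and uniqueness of fluid model solutions.) For every ϑ ∈ I there exists exactly one fluid model solution ζ with initial measure ϑ. -/

import Mathlib

open MeasureTheory Set Filter Topology
open scoped ENNReal

noncomputable section

namespace OverloadedFIFO

/-- The complement `G(x) = Γ((x, ∞))` of the cumulative distribution function of `Γ`. -/
def Gk (Γ : MeasureTheory.Measure ℝ) (x : ℝ) : ℝ := (Γ (Set.Ioi x)).toReal

/-- Model data: `K` job classes with arrival rates `lam`, service rates `mu`, and
deadline (patience) distributions `Γ`, in the overloaded regime `ρ > 1`.  Each `Γ k` is a
Borel probability measure on `[0,∞)` (no mass on negatives), with continuous c.d.f.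
(no atoms, in particular `Γ k {0} = 0`) and finite mean. -/
structure Data (K : ℕ) where
  lam : Fin K → ℝ
  mu : Fin K → ℝ
  Γ : Fin K → MeasureTheory.Measure ℝ
  lam_pos : ∀ k, 0 < lam k
  mu_pos : ∀ k, 0 < mu k
  Γ_prob : ∀ k, MeasureTheory.IsProbabilityMeasure (Γ k)
  Γ_null_neg : ∀ k, Γ k (Set.Iio 0) = 0
  Γ_noAtom : ∀ k, ∀ x : ℝ, Γ k {x} = 0
  Γ_finite_mean : ∀ k, MeasureTheory.Integrable id (Γ k)
  rho_gt_one : 1 < ∑ k, lam k / mu k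

instance {K : ℕ} (D : Data K) (k : Fin K) : IsProbabilityMeasure (D.Γ k) := D.Γ_prob k

/-- `ρ_k = λ_k / μ_k`. -/
def Data.rho {K : ℕ} (D : Data K) (k : Fin K) : ℝ := D.lam k / D.mu k

/-- `ρ = Σ_k ρ_k`. -/
def Data.rhoTot {K : ℕ} (D : Data K) : ℝ := ∑ k, D.rho k

/-- A workload fluid model solution: a nonnegative function `w` on `[0,∞)` satisfying
`w(t) = w(0) + Σ_k ρ_k ∫_0^t G_k(w(s)) ds − t` for all `t ≥ 0`. -/
def IsWorkloadSol {K : ℕ} (D : Data K) (w : ℝ → ℝ) : Prop :=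
  (∀ t : ℝ, 0 ≤ t → 0 ≤ w t) ∧
  (∀ k : Fin K, ∀ t : ℝ, 0 ≤ t →
    IntervalIntegrable (fun s => Gk (D.Γ k) (w s)) volume 0 t) ∧
  (∀ t : ℝ, 0 ≤ t →
    w t = w 0 + (∑ k, D.rho k * ∫ s in (0:ℝ)..t, Gk (D.Γ k) (w s)) - t)

/-- `w_l = sup {u ≥ 0 : Σ_k ρ_k G_k(u) > 1}`. -/
def wl {K : ℕ} (D : Data K) : ℝ :=
  sSup {u : ℝ | 0 ≤ u ∧ 1 < ∑ k, D.rho k * Gk (D.Γ k) u}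

/-- `w_u = sup {u ≥ 0 : Σ_k ρ_k G_k(u) ≥ 1}`. -/
def wu {K : ℕ} (D : Data K) : ℝ :=
  sSup {u : ℝ | 0 ≤ u ∧ 1 ≤ ∑ k, D.rho k * Gk (D.Γ k) u}

/-- `d_max = max_k sup {x ≥ 0 : G_k(x) > 0} ∈ (0,∞]`, as an extended nonnegative real. -/
def dmax {K : ℕ} (D : Data K) : ℝ≥0∞ :=
  ⨆ k, sSup (ENNReal.ofReal '' {x : ℝ | 0 ≤ x ∧ 0 < Gk (D.Γ k) x})

/-- `τ(t) = inf {s ∈ [0,t] : w(s) + s ≥ t}`. -/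
def tauF (w : ℝ → ℝ) (t : ℝ) : ℝ := sInf {s : ℝ | 0 ≤ s ∧ s ≤ t ∧ t ≤ w s + s}

/-- The nonnegative quadrant `[0,∞)²`. -/
def Q : Set (ℝ × ℝ) := {p | 0 ≤ p.1 ∧ 0 ≤ p.2}

/-- The shift `B_x = {y ∈ [0,∞)² : y − x ∈ B}` of a set `B ⊆ [0,∞)²`. -/
def shift (B : Set (ℝ × ℝ)) (x : ℝ × ℝ) : Set (ℝ × ℝ) :=
  {y | y ∈ Q ∧ (y.1 - x.1, y.2 - x.2) ∈ B}

/-- Diagonal shift `B_t = B_{(t,t)}`. -/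
def shiftd (B : Set (ℝ × ℝ)) (t : ℝ) : Set (ℝ × ℝ) := shift B (t, t)

/-- The set `C = ([0,∞)×{0}) ∪ ({0}×[0,∞))`. -/
def Cset : Set (ℝ × ℝ) := {p | (0 ≤ p.1 ∧ p.2 = 0) ∨ (p.1 = 0 ∧ 0 ≤ p.2)}

/-- The `κ`-enlargement `B^κ = {x ∈ [0,∞)² : inf_{y ∈ B} ‖x−y‖ < κ}` (Euclidean norm). -/
def enlarge (B : Set (ℝ × ℝ)) (κ : ℝ) : Set (ℝ × ℝ) :=
  {x | x ∈ Q ∧ ∃ y ∈ B, Real.sqrt ((x.1 - y.1) ^ 2 + (x.2 - y.2) ^ 2) < κ}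

/-- `w_ϑ = sup {x ≥ 0 : ϑ_+([x,∞)×[0,∞)) > 0}` for a `K`-tuple `ϑ` of measures on `[0,∞)²`. -/
def wMeas {K : ℕ} (ϑ : Fin K → MeasureTheory.Measure (ℝ × ℝ)) : ℝ :=
  sSup {x : ℝ | 0 ≤ x ∧ 0 < ∑ k, ϑ k (Set.Ici x ×ˢ Set.Ici (0:ℝ))}

/-- Membership in the set `I` of admissible initial measures: each `ϑ k` is a finite Borel
measure on `[0,∞)²`; (I.1) the superposition charges no corner set `C_x`, `x ∈ [0,∞)²`;
(I.2) `w_ϑ < ∞`; (I.3) `max_k G_k(w_ϑ − ε) > 0` for every `ε > 0`. -/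
def MemI {K : ℕ} (D : Data K) (ϑ : Fin K → MeasureTheory.Measure (ℝ × ℝ)) : Prop :=
  (∀ k, IsFiniteMeasure (ϑ k)) ∧
  (∀ k, ϑ k Qᶜ = 0) ∧
  (∀ x ∈ Q, (∑ k, ϑ k (shift Cset x)) = 0) ∧
  BddAbove {x : ℝ | 0 ≤ x ∧ 0 < ∑ k, ϑ k (Set.Ici x ×ˢ Set.Ici (0:ℝ))} ∧
  (∀ ε : ℝ, 0 < ε → ∃ k, 0 < Gk (D.Γ k) (wMeas ϑ - ε))

/-- `δ⁺_w`: the Dirac measure at `w` if `w > 0`, and the zero measure otherwise. -/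
def deltaPlus (w : ℝ) : MeasureTheory.Measure ℝ :=
  if 0 < w then MeasureTheory.Measure.dirac w else 0

instance (w : ℝ) : SFinite (deltaPlus w) := by
  unfold deltaPlus; split_ifs <;> infer_instance

/-- `(δ⁺_w × Γ)(B)`, as a real number. -/
def kern (Γ : MeasureTheory.Measure ℝ) (w : ℝ) (B : Set (ℝ × ℝ)) : ℝ :=
  (((deltaPlus w).prod Γ) B).toReal

/-- A (measure-valued) fluid model solution with initial measure `ϑ`: a family
`ζ(t) = (ζ_1(t),…,ζ_K(t))` of finite Borel measures on `[0,∞)²` with `ζ(0) = ϑ` satisfying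
`ζ_k(t)(B) = ϑ_k(B_t) + λ_k ∫_0^t (δ⁺_{w(s)} × Γ_k)(B_{t−s}) ds` for every Borel
`B ⊆ [0,∞)²` and `t ≥ 0`, where `w` is the (unique) workload fluid model solution with
`w(0) = w_ϑ`. -/
def IsFluidSol {K : ℕ} (D : Data K) (ϑ : Fin K → MeasureTheory.Measure (ℝ × ℝ))
    (ζ : ℝ → Fin K → MeasureTheory.Measure (ℝ × ℝ)) : Prop :=
  ∃ w : ℝ → ℝ, IsWorkloadSol D w ∧ w 0 = wMeas ϑ ∧
    (∀ t : ℝ, 0 ≤ t → ∀ k, IsFiniteMeasure (ζ t k) ∧ ζ t k Qᶜ = 0) ∧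
    (∀ k, ζ 0 k = ϑ k) ∧
    (∀ k, ∀ B : Set (ℝ × ℝ), B ⊆ Q → MeasurableSet B → ∀ t : ℝ, 0 ≤ t →
      IntervalIntegrable (fun s => kern (D.Γ k) (w s) (shiftd B (t - s))) volume 0 t ∧
      ζ t k B = ϑ k (shiftd B t) +
        ENNReal.ofReal (D.lam k * ∫ s in (0:ℝ)..t, kern (D.Γ k) (w s) (shiftd B (t - s))))

/-- The candidate invariant state `θ^w`:
`θ^w_k(B) = λ_k ∫_0^w Γ_k({p ≥ u : (w−u, p−u) ∈ B}) du`. -/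
def thetaW {K : ℕ} (D : Data K) (w : ℝ) (k : Fin K) : MeasureTheory.Measure (ℝ × ℝ) :=
  ENNReal.ofReal (D.lam k) •
    MeasureTheory.Measure.map (fun up : ℝ × ℝ => (w - up.1, up.2 - up.1))
      ((((MeasureTheory.volume.restrict (Set.Ioo (0:ℝ) w))).prod (D.Γ k)).restrict
        {up : ℝ × ℝ | up.1 ≤ up.2})

section Glemmas
variable (Γ : MeasureTheory.Measure ℝ)

lemma Gk_nonneg (x : ℝ) : 0 ≤ Gk Γ x := ENNReal.toReal_nonneg

lemma Gk_anti [IsFiniteMeasure Γ] : Antitone (Gk Γ) := fun x y hxy =>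
  ENNReal.toReal_mono (measure_ne_top Γ _) (measure_mono (Set.Ioi_subset_Ioi hxy))

lemma Gk_le_one [IsProbabilityMeasure Γ] (x : ℝ) : Gk Γ x ≤ 1 := by
  have h : Γ (Set.Ioi x) ≤ 1 := prob_le_one
  simpa [Gk] using ENNReal.toReal_mono ENNReal.one_ne_top h

lemma Gk_sub [IsFiniteMeasure Γ] {x y : ℝ} (h : x ≤ y) :
    Gk Γ x - Gk Γ y = (Γ (Set.Ioc x y)).toReal := by
  have hsplit : Γ (Set.Ioi x) = Γ (Set.Ioc x y) + Γ (Set.Ioi y) := by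
    rw [← Set.Ioc_union_Ioi_eq_Ioi h,
      measure_union Set.Ioc_disjoint_Ioi_same measurableSet_Ioi]
  rw [Gk, Gk, hsplit, ENNReal.toReal_add (measure_ne_top _ _) (measure_ne_top _ _)]
  ring

lemma Gk_continuous [IsFiniteMeasure Γ] (hatom : ∀ x : ℝ, Γ {x} = 0) : Continuous (Gk Γ) := by
  rw [continuous_iff_continuousAt]
  intro x
  rw [Metric.continuousAt_iff]
  intro ε hε
  have htend : ∀ c : ℝ, Tendsto (fun n : ℕ => c + 1/((n:ℝ)+1)) atTop (𝓝 c) := by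
    intro c
    have := tendsto_one_div_add_atTop_nhds_zero_nat.const_add c
    simpa using this
  have htend' : ∀ c : ℝ, Tendsto (fun n : ℕ => c - 1/((n:ℝ)+1)) atTop (𝓝 c) := by
    intro c
    have := tendsto_one_div_add_atTop_nhds_zero_nat.const_sub c
    simpa using this
  have h1 : (⋂ n : ℕ, Set.Ioc (x - 1/((n:ℝ)+1)) (x + 1/((n:ℝ)+1))) = {x} := by
    ext y
    simp only [Set.mem_iInter, Set.mem_Ioc, Set.mem_singleton_iff]
    constructor
    · intro h
      have hy1 : y ≤ x := ge_of_tendsto (htend x) (Filter.Eventually.of_forall fun n => (h n).2)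
      have hy2 : x ≤ y :=
        le_of_tendsto (htend' x) (Filter.Eventually.of_forall fun n => (h n).1.le)
      linarith
    · rintro rfl
      intro n
      have : (0:ℝ) < 1/((n:ℝ)+1) := by positivity
      constructor <;> linarith
  have hmono : Antitone fun n : ℕ => Set.Ioc (x - 1/((n:ℝ)+1)) (x + 1/((n:ℝ)+1)) := by
    intro n m hnm
    have hle : 1/((m:ℝ)+1) ≤ 1/((n:ℝ)+1) := by
      apply one_div_le_one_div_of_le (by positivity)
      exact_mod_cast Nat.succ_le_succ hnm
    exact Set.Ioc_subset_Ioc (by linarith) (by linarith)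
  have h2 := tendsto_measure_iInter_atTop (μ := Γ)
    (fun n => measurableSet_Ioc.nullMeasurableSet) hmono ⟨0, measure_ne_top _ _⟩
  rw [h1, hatom x] at h2
  have h3 : Tendsto (fun n : ℕ => (Γ (Set.Ioc (x - 1/((n:ℝ)+1)) (x + 1/((n:ℝ)+1)))).toReal)
      atTop (𝓝 0) := by
    have := (ENNReal.tendsto_toReal (a := 0) (by simp)).comp h2
    simpa [Function.comp_def] using this
  obtain ⟨n, hn⟩ := (h3.eventually_lt_const hε).exists
  refine ⟨1/((n:ℝ)+1), by positivity, fun {y} hy => ?_⟩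
  rw [Real.dist_eq] at hy ⊢
  set δ := 1/((n:ℝ)+1) with hδ
  have hsub : ∀ u v : ℝ, x - δ ≤ u → u ≤ v → v ≤ x + δ →
      (Γ (Set.Ioc u v)).toReal < ε := by
    intro u v h1' h2' h3'
    refine lt_of_le_of_lt ?_ hn
    exact ENNReal.toReal_mono (measure_ne_top _ _)
      (measure_mono (Set.Ioc_subset_Ioc h1' h3'))
  have hyb := abs_lt.1 hy
  rcases le_total x y with hxy | hxy
  · have habs : |Gk Γ y - Gk Γ x| = Gk Γ x - Gk Γ y := by
      rw [abs_sub_comm, abs_of_nonneg (sub_nonneg.2 (Gk_anti Γ hxy))]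
    rw [habs, Gk_sub Γ hxy]
    exact hsub x y (by linarith [hyb.1]) hxy (by linarith [hyb.2])
  · have habs : |Gk Γ y - Gk Γ x| = Gk Γ y - Gk Γ x := by
      rw [abs_of_nonneg (sub_nonneg.2 (Gk_anti Γ hxy))]
    rw [habs, Gk_sub Γ hxy]
    exact hsub y x (by linarith [hyb.1]) hxy (by linarith [hyb.2])
  
lemma Gk_zero [IsProbabilityMeasure Γ] (hneg : Γ (Set.Iio 0) = 0) (hatom : Γ {(0:ℝ)} = 0) :
    Gk Γ 0 = 1 := by
  have hIic : Γ (Set.Iic 0) = 0 := by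
    rw [← Set.Iio_union_right]
    exact measure_union_null hneg hatom
  have h : Γ (Set.Ioi 0) = 1 := by
    have hc := measure_compl (μ := Γ) measurableSet_Iic (measure_ne_top _ (Set.Iic 0))
    rw [Set.compl_Iic, hIic, measure_univ, tsub_zero] at hc
    exact hc
  simp [Gk, h]

lemma Gk_tendsto_zero [IsFiniteMeasure Γ] : Tendsto (fun n : ℕ => Gk Γ n) atTop (𝓝 0) := by
  have h1 : (⋂ n : ℕ, Set.Ioi (n : ℝ)) = ∅ := by
    ext y
    simp only [Set.mem_iInter, Set.mem_Ioi, Set.mem_empty_iff_false, iff_false, not_forall,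
      not_lt]
    obtain ⟨n, hn⟩ := exists_nat_gt y
    exact ⟨n, hn.le⟩
  have h2 := tendsto_measure_iInter_atTop (μ := Γ) (s := fun n : ℕ => Set.Ioi (n:ℝ))
    (fun n => measurableSet_Ioi.nullMeasurableSet)
    (fun n m hnm => Set.Ioi_subset_Ioi (by exact_mod_cast hnm)) ⟨0, measure_ne_top _ _⟩
  rw [h1, measure_empty] at h2
  have := (ENNReal.tendsto_toReal (a := 0) (by simp)).comp h2
  simpa [Function.comp_def, Gk] using this

end Glemmas

section Fb
variable {K : ℕ} (D : Data K)

/-- The drift `F(u) = Σ_k ρ_k G_k(u) − 1`. -/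
def Fb (u : ℝ) : ℝ := (∑ k, D.rho k * Gk (D.Γ k) u) - 1

lemma rho_pos (k : Fin K) : 0 < D.rho k := div_pos (D.lam_pos k) (D.mu_pos k)

lemma Fb_continuous : Continuous (Fb D) :=
  (continuous_finset_sum _ fun k _ =>
    continuous_const.mul (Gk_continuous (D.Γ k) (D.Γ_noAtom k))).sub continuous_const

lemma Fb_anti : Antitone (Fb D) := by
  intro x y hxy
  have h : ∀ k ∈ Finset.univ, D.rho k * Gk (D.Γ k) y ≤ D.rho k * Gk (D.Γ k) x := fun k _ =>
    mul_le_mul_of_nonneg_left (Gk_anti (D.Γ k) hxy) (rho_pos D k).le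
  have := Finset.sum_le_sum h
  simp only [Fb]
  linarith

lemma Fb_zero_pos : 0 < Fb D 0 := by
  have h : ∀ k ∈ Finset.univ, D.rho k * Gk (D.Γ k) 0 = D.rho k := fun k _ => by
    rw [Gk_zero _ (D.Γ_null_neg k) (D.Γ_noAtom k 0), mul_one]
  have hsum : (∑ k, D.rho k * Gk (D.Γ k) 0) = ∑ k, D.rho k := Finset.sum_congr rfl h
  have hrho : 1 < ∑ k, D.rho k := by simpa only [Data.rho] using D.rho_gt_one
  simp only [Fb, hsum]
  linarith

lemma exists_Fb_neg (c : ℝ) : ∃ u : ℝ, c ≤ u ∧ Fb D u < 0 := by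
  have h : Tendsto (fun n : ℕ => ∑ k, D.rho k * Gk (D.Γ k) n) atTop (𝓝 0) := by
    have := tendsto_finset_sum (Finset.univ : Finset (Fin K))
      (fun k _ => (Gk_tendsto_zero (D.Γ k)).const_mul (D.rho k))
    simpa using this
  have h2 : ∀ᶠ n : ℕ in atTop, (∑ k, D.rho k * Gk (D.Γ k) n) < 1 :=
    h.eventually_lt_const one_pos
  have h3 : ∀ᶠ n : ℕ in atTop, c ≤ (n:ℝ) :=
    tendsto_natCast_atTop_atTop.eventually_ge_atTop c
  obtain ⟨n, hn1, hn2⟩ := (h2.and h3).exists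
  refine ⟨n, hn2, ?_⟩
  simp only [Fb]
  linarith

end Fb


section ODE

/-- Core existence lemma for `w' = F(w)`, increasing case: `F > 0` on `[a,b)`, `F(b) = 0`. -/
lemma ode_exists_inc {F : ℝ → ℝ} (hF : Continuous F) {a b : ℝ} (hab : a < b)
    (hFb : F b = 0) (hpos : ∀ x, a ≤ x → x < b → 0 < F x) :
    ∃ w : ℝ → ℝ, Continuous w ∧ w 0 = a ∧ (∀ t, a ≤ w t ∧ w t ≤ b) ∧
      ∀ t, 0 ≤ t → w t = a + ∫ s in (0:ℝ)..t, F (w s) := by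
  classical
  set f : ℝ → ℝ := fun u => (F u)⁻¹ with hf
  have hfpos : ∀ x, a ≤ x → x < b → 0 < f x := fun x h1 h2 => inv_pos.2 (hpos x h1 h2)
  have hfint : ∀ x y : ℝ, a ≤ x → x ≤ y → y < b → IntervalIntegrable f volume x y := by
    intro x y h1 h2 h3
    apply ContinuousOn.intervalIntegrable
    rw [Set.uIcc_of_le h2]
    exact (hF.continuousOn).inv₀ fun u hu =>
      (hpos u (h1.trans hu.1) (lt_of_le_of_lt hu.2 h3)).ne'
  set T : ℝ → ℝ := fun x => ∫ u in a..x, f u with hT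
  have hTa : T a = 0 := intervalIntegral.integral_same
  have hTadd : ∀ x y : ℝ, a ≤ x → x ≤ y → y < b → T y = T x + ∫ u in x..y, f u := by
    intro x y h1 h2 h3
    rw [hT]
    exact (intervalIntegral.integral_add_adjacent_intervals
      (hfint a x le_rfl h1 (lt_of_le_of_lt h2 h3)) (hfint x y h1 h2 h3)).symm
  have hTmono : ∀ x y : ℝ, a ≤ x → x < y → y < b → T x < T y := by
    intro x y h1 h2 h3
    rw [hTadd x y h1 h2.le h3]
    have hpos' : 0 < ∫ u in x..y, f u := by
      apply intervalIntegral.intervalIntegral_pos_of_pos_on (hfint x y h1 h2.le h3)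
      · intro u hu
        exact hfpos u (h1.trans hu.1.le) (hu.2.trans h3)
      · exact h2
    linarith
  have hT0 : ∀ x, a ≤ x → x < b → 0 ≤ T x := by
    intro x h1 h2
    rcases eq_or_lt_of_le h1 with rfl | h1'
    · rw [hTa]
    · rw [← hTa]; exact (hTmono a x le_rfl h1' h2).le
  have hTcont : ∀ x, a ≤ x → x < b → ContinuousWithinAt T (Set.Ico a b) x := by
    intro x h1 h2
    set c : ℝ := (x + b)/2 with hc
    have hxc : x < c := by rw [hc]; linarith
    have hcb : c < b := by rw [hc]; linarith
    have hprim : ContinuousOn T (Set.uIcc a c) :=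
      intervalIntegral.continuousOn_primitive_interval'
        (hfint a c le_rfl (h1.trans hxc.le) hcb) Set.left_mem_uIcc
    rw [Set.uIcc_of_le (h1.trans hxc.le)] at hprim
    have hx_mem : x ∈ Set.Icc a c := ⟨h1, hxc.le⟩
    refine (hprim.continuousWithinAt hx_mem).mono_of_mem_nhdsWithin ?_
    rw [mem_nhdsWithin]
    exact ⟨Set.Iio c, isOpen_Iio, hxc, fun y hy => ⟨hy.2.1, hy.1.le⟩⟩
  have hTderiv : ∀ x, a < x → x < b → HasDerivAt T (f x) x := by
    intro x h1 h2
    apply intervalIntegral.integral_hasDerivAt_right (hfint a x le_rfl h1.le h2)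
    · exact ⟨Set.univ, Filter.univ_mem, (hF.measurable.inv).aestronglyMeasurable⟩
    · exact (hF.continuousAt).inv₀ (hpos x h1.le h2).ne'
  set S : ℝ → Set ℝ := fun t => insert a {x | (a ≤ x ∧ x < b) ∧ T x ≤ t} with hS
  have hSne : ∀ t, (S t).Nonempty := fun t => ⟨a, Set.mem_insert _ _⟩
  have hSb : ∀ t, ∀ y ∈ S t, y ≤ b := by
    intro t y hy
    rcases Set.mem_insert_iff.1 hy with rfl | hy'
    · exact hab.le
    · exact hy'.1.2.le
  have hSge : ∀ t, ∀ y ∈ S t, a ≤ y := by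
    intro t y hy
    rcases Set.mem_insert_iff.1 hy with rfl | hy'
    · exact le_rfl
    · exact hy'.1.1
  have hSbdd : ∀ t, BddAbove (S t) := fun t => ⟨b, fun y hy => hSb t y hy⟩
  set w : ℝ → ℝ := fun t => sSup (S t) with hw
  have hwa : ∀ t, a ≤ w t := fun t => le_csSup (hSbdd t) (Set.mem_insert _ _)
  have hwb : ∀ t, w t ≤ b := fun t => csSup_le (hSne t) (hSb t)
  have hwmono : Monotone w := by
    intro t t' h
    apply csSup_le_csSup (hSbdd t') (hSne t)
    intro y hy
    rcases Set.mem_insert_iff.1 hy with rfl | hy'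
    · exact Set.mem_insert _ _
    · exact Set.mem_insert_of_mem _ ⟨hy'.1, hy'.2.trans h⟩
  have hwneg : ∀ t, t ≤ 0 → w t = a := by
    intro t ht
    have hSeq : S t = {a} := by
      apply Set.Subset.antisymm
      · intro y hy
        rcases Set.mem_insert_iff.1 hy with rfl | hy'
        · rfl
        · rcases eq_or_lt_of_le hy'.1.1 with h | hlt
          · exact h.symm
          · exfalso
            have h2 := hTmono a y le_rfl hlt hy'.1.2
            rw [hTa] at h2
            linarith [hy'.2]
      · intro y hy
        rw [Set.mem_singleton_iff.1 hy]
        exact Set.mem_insert _ _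
    rw [hw]
    simp only [hSeq, csSup_singleton]
  have hw0 : w 0 = a := hwneg 0 le_rfl
  have hTw : ∀ t, 0 ≤ t → w t < b → T (w t) = t := by
    intro t ht hwtb
    have hwt_mem : a ≤ w t := hwa t
    have h_le : T (w t) ≤ t := by
      by_contra hcon
      push_neg at hcon
      have hne : w t ≠ a := by
        intro h
        rw [h, hTa] at hcon
        linarith
      have hlt : a < w t := lt_of_le_of_ne hwt_mem (Ne.symm hne)
      have hcont := hTcont (w t) hwt_mem hwtb
      have hmem : T ⁻¹' (Set.Ioi t) ∈ 𝓝[Set.Ico a b] (w t) := hcont (Ioi_mem_nhds hcon)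
      rw [mem_nhdsWithin] at hmem
      obtain ⟨U, hUopen, hxU, hUsub⟩ := hmem
      obtain ⟨δ, hδ, hball⟩ := Metric.isOpen_iff.1 hUopen _ hxU
      set η : ℝ := min δ (w t - a) with hη
      have hηpos : 0 < η := lt_min hδ (by linarith)
      obtain ⟨z, hzS, hz⟩ := exists_lt_of_lt_csSup (hSne t) (show w t - η < w t by linarith)
      have hzle : z ≤ w t := le_csSup (hSbdd t) hzS
      have hza : a < z := by
        have : η ≤ w t - a := min_le_right _ _
        linarith
      have hzC : (a ≤ z ∧ z < b) ∧ T z ≤ t := by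
        rcases Set.mem_insert_iff.1 hzS with rfl | h'
        · exact absurd rfl hza.ne
        · exact h'
      have hzU : z ∈ U := by
        apply hball
        rw [Metric.mem_ball, Real.dist_eq, abs_of_nonpos (by linarith)]
        have : η ≤ δ := min_le_left _ _
        linarith
      have := hUsub ⟨hzU, hza.le, hzC.1.2⟩
      exact absurd hzC.2 (not_le.2 this)
    have h_ge : t ≤ T (w t) := by
      by_contra hcon
      push_neg at hcon
      have hcont := hTcont (w t) hwt_mem hwtb
      have hmem : T ⁻¹' (Set.Iio t) ∈ 𝓝[Set.Ico a b] (w t) := hcont (Iio_mem_nhds hcon)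
      rw [mem_nhdsWithin] at hmem
      obtain ⟨U, hUopen, hxU, hUsub⟩ := hmem
      obtain ⟨δ, hδ, hball⟩ := Metric.isOpen_iff.1 hUopen _ hxU
      set z : ℝ := min (w t + δ/2) ((w t + b)/2) with hz
      have hz1 : w t < z := lt_min (by linarith) (by linarith)
      have hz2 : z < b := lt_of_le_of_lt (min_le_right _ _) (by linarith)
      have hz3 : a ≤ z := (hwa t).trans hz1.le
      have hzU : z ∈ U := by
        apply hball
        rw [Metric.mem_ball, Real.dist_eq, abs_of_nonneg (by linarith)]
        have : z ≤ w t + δ/2 := min_le_left _ _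
        linarith
      have hTz : T z < t := hUsub ⟨hzU, hz3, hz2⟩
      have : z ≤ w t := le_csSup (hSbdd t) (Set.mem_insert_of_mem _ ⟨⟨hz3, hz2⟩, hTz.le⟩)
      linarith
    linarith
  have hrange : ∀ x, a ≤ x → x < b → w (T x) = x := by
    intro x h1 h2
    have hx_mem : x ∈ S (T x) := Set.mem_insert_of_mem _ ⟨⟨h1, h2⟩, le_rfl⟩
    have hle : x ≤ w (T x) := le_csSup (hSbdd _) hx_mem
    rcases eq_or_lt_of_le hle with h | h
    · exact h.symm
    · exfalso
      obtain ⟨z, hzS, hz⟩ := exists_lt_of_lt_csSup (hSne (T x)) h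
      have hza : a < z := lt_of_le_of_lt h1 hz
      have hzC : (a ≤ z ∧ z < b) ∧ T z ≤ T x := by
        rcases Set.mem_insert_iff.1 hzS with rfl | h'
        · exact absurd rfl hza.ne
        · exact h'
      have := hTmono x z h1 hz hzC.1.2
      linarith [hzC.2]
  have hwcont : Continuous w := by
    rw [continuous_iff_continuousAt]
    intro t
    have hne1 : (𝓝[<] t) ≠ ⊥ := Filter.NeBot.ne inferInstance
    have hne2 : (𝓝[>] t) ≠ ⊥ := Filter.NeBot.ne inferInstance
    rw [hwmono.continuousAt_iff_leftLim_eq_rightLim]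
    have hbddl : BddAbove (w '' Set.Iio t) := ⟨b, by rintro y ⟨s, _, rfl⟩; exact hwb s⟩
    have hbddr : BddBelow (w '' Set.Ioi t) := ⟨a, by rintro y ⟨s, _, rfl⟩; exact hwa s⟩
    have hleft : Function.leftLim w t = w t := by
      apply le_antisymm (hwmono.leftLim_le le_rfl)
      rw [hwmono.leftLim_eq_sSup]
      rcases le_or_gt t 0 with ht | ht
      · have : w (t-1) ∈ w '' Set.Iio t := ⟨t-1, by rw [Set.mem_Iio]; linarith, rfl⟩
        have h2 := le_csSup hbddl this
        rw [hwneg (t-1) (by linarith), ← hwneg t ht] at h2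
        exact h2
      · apply le_of_forall_sub_le
        intro ε hε
        rcases eq_or_lt_of_le (hwa t) with hwta | hwta
        · have : w (t/2) ∈ w '' Set.Iio t := ⟨t/2, by rw [Set.mem_Iio]; linarith, rfl⟩
          have h2 := le_csSup hbddl this
          have h3 := hwa (t/2)
          linarith
        · set x : ℝ := max ((a + w t)/2) (w t - ε/2) with hx
          have hx1 : a < x := lt_of_lt_of_le (by linarith) (le_max_left _ _)
          have hx2 : x < w t := max_lt (by linarith) (by linarith)
          have hx3 : w t - ε ≤ x := le_trans (by linarith) (le_max_right _ _)
          have hxb : x < b := lt_of_lt_of_le hx2 (hwb t)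
          have hws : w (T x) = x := hrange x hx1.le hxb
          have hst : T x < t := by
            by_contra hcon
            push_neg at hcon
            have := hwmono hcon
            rw [hws] at this
            linarith
          have : w (T x) ∈ w '' Set.Iio t := ⟨T x, hst, rfl⟩
          have h2 := le_csSup hbddl this
          rw [hws] at h2
          linarith
    have hright : Function.rightLim w t = w t := by
      apply le_antisymm _ (hwmono.le_rightLim le_rfl)
      rw [hwmono.rightLim_eq_sInf]
      rcases lt_or_ge t 0 with ht | ht
      · have : w (t/2) ∈ w '' Set.Ioi t := ⟨t/2, by rw [Set.mem_Ioi]; linarith, rfl⟩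
        have h2 := csInf_le hbddr this
        rw [hwneg (t/2) (by linarith), ← hwneg t ht.le] at h2
        exact h2
      · rcases eq_or_lt_of_le (hwb t) with hwtb | hwtb
        · have : w (t+1) ∈ w '' Set.Ioi t := ⟨t+1, by rw [Set.mem_Ioi]; linarith, rfl⟩
          have h2 := csInf_le hbddr this
          have h3 := hwb (t+1)
          rw [hwtb]
          exact h2.trans h3
        · apply le_of_forall_sub_le
          intro ε hε
          set x : ℝ := min ((w t + b)/2) (w t + ε/2) with hx
          have hx1 : w t < x := lt_min (by linarith) (by linarith)
          have hx2 : x < b := lt_of_le_of_lt (min_le_left _ _) (by linarith)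
          have hx3 : x ≤ w t + ε/2 := min_le_right _ _
          have hxa : a ≤ x := (hwa t).trans hx1.le
          have hws : w (T x) = x := hrange x hxa hx2
          have hst : t < T x := by
            by_contra hcon
            push_neg at hcon
            have := hwmono hcon
            rw [hws] at this
            linarith
          have : w (T x) ∈ w '' Set.Ioi t := ⟨T x, hst, rfl⟩
          have h2 := csInf_le hbddr this
          rw [hws] at h2
          linarith
    rw [hleft, hright]
  have hopen : IsOpen {y : ℝ | 0 < y ∧ w y < b} :=
    (isOpen_lt continuous_const continuous_id).inter (isOpen_lt hwcont continuous_const)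
  have hderiv : ∀ s, 0 < s → w s < b → HasDerivAt w (F (w s)) s := by
    intro s hs hsb
    have hwa' : a < w s := by
      rcases eq_or_lt_of_le (hwa s) with h | h
      · exfalso
        have h2 := hTw s hs.le hsb
        rw [← h, hTa] at h2
        linarith
      · exact h
    have hTd : HasDerivAt T (f (w s)) (w s) := hTderiv (w s) hwa' hsb
    have hfg : ∀ᶠ y in 𝓝 s, T (w y) = y := by
      filter_upwards [hopen.mem_nhds ⟨hs, hsb⟩] with y hy
      exact hTw y hy.1.le hy.2
    have hres := HasDerivAt.of_local_left_inverse (hwcont.continuousAt) hTd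
      (ne_of_gt (hfpos (w s) hwa'.le hsb)) hfg
    rw [hf] at hres
    simpa [inv_inv] using hres
  have hFTC : ∀ t1, 0 ≤ t1 → (∀ s, 0 < s → s < t1 → w s < b) →
      ∫ s in (0:ℝ)..t1, F (w s) = w t1 - a := by
    intro t1 ht1 hbelow
    rcases eq_or_lt_of_le ht1 with rfl | ht1'
    · rw [intervalIntegral.integral_same, hw0]
      ring
    · have hres := intervalIntegral.integral_eq_sub_of_hasDeriv_right_of_le ht1'.le
        (hwcont.continuousOn)
        (fun s hs => (hderiv s hs.1 (hbelow s hs.1 hs.2)).hasDerivWithinAt)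
        ((hF.comp hwcont).continuousOn.intervalIntegrable)
      rw [hres, hw0]
  refine ⟨w, hwcont, hw0, fun t => ⟨hwa t, hwb t⟩, fun t ht => ?_⟩
  rcases lt_or_eq_of_le (hwb t) with hwtb | hwtb
  · have hres := hFTC t ht (fun s hs hst => lt_of_le_of_lt (hwmono hst.le) hwtb)
    rw [hres]
    ring
  · set Sb : Set ℝ := {s | 0 ≤ s ∧ w s = b} with hSb'
    have hSbne : Sb.Nonempty := ⟨t, ht, hwtb⟩
    have hSbdd' : BddBelow Sb := ⟨0, fun s hs => hs.1⟩
    have hSbcl : IsClosed Sb :=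
      (isClosed_le continuous_const continuous_id).inter (isClosed_eq hwcont continuous_const)
    set t1 := sInf Sb with ht1'
    have ht1mem : t1 ∈ Sb := hSbcl.csInf_mem hSbne hSbdd'
    have ht1le : t1 ≤ t := csInf_le hSbdd' ⟨ht, hwtb⟩
    have hbelow : ∀ s, 0 < s → s < t1 → w s < b := by
      intro s hs hst
      rcases lt_or_eq_of_le (hwb s) with h | h
      · exact h
      · exact absurd (csInf_le hSbdd' ⟨hs.le, h⟩) (not_le.2 hst)
    have hpiece1 := hFTC t1 ht1mem.1 hbelow
    have hpiece2 : ∫ s in t1..t, F (w s) = 0 := by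
      have heq : Set.EqOn (fun s => F (w s)) (fun _ => (0:ℝ)) (Set.uIcc t1 t) := by
        intro s hs
        rw [Set.uIcc_of_le ht1le] at hs
        have h1 : w s = b := le_antisymm (hwb s) (ht1mem.2 ▸ hwmono hs.1)
        simp only [h1, hFb]
      rw [intervalIntegral.integral_congr heq, intervalIntegral.integral_const]
      simp
    have hadd : (∫ s in (0:ℝ)..t1, F (w s)) + ∫ s in t1..t, F (w s)
        = ∫ s in (0:ℝ)..t, F (w s) :=
      intervalIntegral.integral_add_adjacent_intervals
        ((hF.comp hwcont).continuousOn.intervalIntegrable)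
        ((hF.comp hwcont).continuousOn.intervalIntegrable)
    rw [← hadd, hpiece1, hpiece2, ht1mem.2, hwtb]
    ring

end ODE

/-- Decreasing case, by reflection. -/
lemma ode_exists_dec {F : ℝ → ℝ} (hF : Continuous F) {a b : ℝ} (hba : b < a)
    (hFb : F b = 0) (hneg : ∀ x, b < x → x ≤ a → F x < 0) :
    ∃ w : ℝ → ℝ, Continuous w ∧ w 0 = a ∧ (∀ t, b ≤ w t ∧ w t ≤ a) ∧
      ∀ t, 0 ≤ t → w t = a + ∫ s in (0:ℝ)..t, F (w s) := by
  obtain ⟨v, hvcont, hv0, hvmem, hveq⟩ := ode_exists_inc (F := fun x => -F (-x))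
    ((hF.comp continuous_neg).neg) (a := -a) (b := -b) (by linarith) (by simp [hFb])
    (fun x h1 h2 => by
      have := hneg (-x) (by linarith) (by linarith)
      show 0 < -F (-x)
      linarith)
  refine ⟨fun t => -v t, hvcont.neg, by show -v 0 = a; rw [hv0]; ring,
    fun t => ⟨show b ≤ -v t by linarith [(hvmem t).2],
      show -v t ≤ a by linarith [(hvmem t).1]⟩, fun t ht => ?_⟩
  have h := hveq t ht
  have h2 : (∫ s in (0:ℝ)..t, -F (-v s)) = - ∫ s in (0:ℝ)..t, F (-v s) :=
    intervalIntegral.integral_neg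
  rw [h2] at h
  have h3 : -v t = a + ∫ s in (0:ℝ)..t, F (-v s) := by linarith
  exact h3

lemma Fb_integral_eq {K : ℕ} (D : Data K) {w : ℝ → ℝ} (hw : Continuous w) (t : ℝ) :
    ∫ s in (0:ℝ)..t, Fb D (w s)
      = (∑ k, D.rho k * ∫ s in (0:ℝ)..t, Gk (D.Γ k) (w s)) - t := by
  have hint : ∀ k : Fin K,
      IntervalIntegrable (fun s => D.rho k * Gk (D.Γ k) (w s)) volume 0 t := fun k =>
    (continuous_const.mul
      ((Gk_continuous (D.Γ k) (D.Γ_noAtom k)).comp hw)).continuousOn.intervalIntegrable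
  have hsumcont : Continuous (fun s => ∑ k, D.rho k * Gk (D.Γ k) (w s)) :=
    continuous_finset_sum _ fun k _ =>
      continuous_const.mul ((Gk_continuous _ (D.Γ_noAtom k)).comp hw)
  have h1 : (∫ s in (0:ℝ)..t, Fb D (w s))
      = (∫ s in (0:ℝ)..t, ∑ k, D.rho k * Gk (D.Γ k) (w s)) - ∫ s in (0:ℝ)..t, (1:ℝ) := by
    rw [← intervalIntegral.integral_sub hsumcont.continuousOn.intervalIntegrable
      intervalIntegrable_const]
    rfl
  rw [h1, intervalIntegral.integral_finset_sum (fun k _ => hint k)]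
  have h2 : ∀ k ∈ Finset.univ, (∫ s in (0:ℝ)..t, D.rho k * Gk (D.Γ k) (w s))
      = D.rho k * ∫ s in (0:ℝ)..t, Gk (D.Γ k) (w s) := fun k _ =>
    intervalIntegral.integral_const_mul _ _
  rw [Finset.sum_congr rfl h2, intervalIntegral.integral_const]
  simp

lemma exists_workload {K : ℕ} (D : Data K) (w0 : ℝ) (h0 : 0 ≤ w0) :
    ∃ w : ℝ → ℝ, Continuous w ∧ IsWorkloadSol D w ∧ w 0 = w0 := by
  have hFcont := Fb_continuous D
  have key : ∃ w : ℝ → ℝ, Continuous w ∧ w 0 = w0 ∧ (∀ t, 0 ≤ w t) ∧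
      ∀ t, 0 ≤ t → w t = w0 + ∫ s in (0:ℝ)..t, Fb D (w s) := by
    rcases lt_trichotomy (Fb D w0) 0 with hF0 | hF0 | hF0
    · set Sz : Set ℝ := {u | 0 ≤ u ∧ 0 ≤ Fb D u} with hSz
      obtain ⟨N, hN1, hN2⟩ := exists_Fb_neg D w0
      have hSne : Sz.Nonempty := ⟨0, le_rfl, (Fb_zero_pos D).le⟩
      have hSbdd : BddAbove Sz := by
        refine ⟨N, fun u hu => ?_⟩
        by_contra hc
        push_neg at hc
        exact absurd (hu.2.trans (Fb_anti D hc.le)) (not_le.2 hN2)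
      have hScl : IsClosed Sz := (isClosed_le continuous_const continuous_id).inter
        (isClosed_le continuous_const hFcont)
      set z := sSup Sz with hz
      have hzmem : z ∈ Sz := hScl.csSup_mem hSne hSbdd
      have hzw0 : z < w0 := by
        by_contra hc
        push_neg at hc
        have := Fb_anti D hc
        linarith [hzmem.2]
      have hneg : ∀ x, z < x → x ≤ w0 → Fb D x < 0 := by
        intro x h1 h2
        by_contra hc
        push_neg at hc
        exact absurd (le_csSup hSbdd ⟨(hzmem.1).trans h1.le, hc⟩) (not_le.2 h1)
      have hz0 : Fb D z = 0 := by
        refine le_antisymm ?_ hzmem.2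
        have hmem : ∀ n : ℕ, Fb D (z + (w0 - z) * (1/((n:ℝ)+1))) < 0 := by
          intro n
          have hp : (0:ℝ) < 1/((n:ℝ)+1) := by positivity
          apply hneg
          · nlinarith
          · have hle1 : (1:ℝ)/((n:ℝ)+1) ≤ 1 := by
              rw [div_le_one (by positivity)]
              linarith [Nat.cast_nonneg (α := ℝ) n]
            nlinarith
        have htt : Tendsto (fun n : ℕ => Fb D (z + (w0 - z) * (1/((n:ℝ)+1)))) atTop
            (𝓝 (Fb D z)) := by
          apply (hFcont.continuousAt).tendsto.comp
          have h2 := (tendsto_one_div_add_atTop_nhds_zero_nat.const_mul (w0 - z)).const_add z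
          simpa [mul_comm] using h2
        exact le_of_tendsto htt (Filter.Eventually.of_forall fun n => (hmem n).le)
      obtain ⟨w, hwcont, hw0, hwmem, hweq⟩ := ode_exists_dec hFcont hzw0 hz0 hneg
      exact ⟨w, hwcont, hw0, fun t => (hzmem.1).trans (hwmem t).1, hweq⟩
    · refine ⟨fun _ => w0, continuous_const, rfl, fun _ => h0, fun t ht => ?_⟩
      simp [hF0]
    · set Sz : Set ℝ := {u | w0 ≤ u ∧ Fb D u ≤ 0} with hSz
      obtain ⟨N, hN1, hN2⟩ := exists_Fb_neg D w0
      have hSne : Sz.Nonempty := ⟨N, hN1, hN2.le⟩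
      have hSbdd : BddBelow Sz := ⟨w0, fun u hu => hu.1⟩
      have hScl : IsClosed Sz := (isClosed_le continuous_const continuous_id).inter
        (isClosed_le hFcont continuous_const)
      set z := sInf Sz with hz
      have hzmem : z ∈ Sz := hScl.csInf_mem hSne hSbdd
      have hzw0 : w0 < z := by
        rcases eq_or_lt_of_le hzmem.1 with h | h
        · exfalso
          rw [h] at hF0
          linarith [hzmem.2]
        · exact h
      have hpos : ∀ x, w0 ≤ x → x < z → 0 < Fb D x := by
        intro x h1 h2
        by_contra hc
        push_neg at hc
        exact absurd (csInf_le hSbdd ⟨h1, hc⟩) (not_le.2 h2)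
      have hz0 : Fb D z = 0 := by
        refine le_antisymm hzmem.2 ?_
        have hmem : ∀ n : ℕ, 0 < Fb D (z - (z - w0) * (1/((n:ℝ)+1))) := by
          intro n
          have hp : (0:ℝ) < 1/((n:ℝ)+1) := by positivity
          apply hpos
          · have hle1 : (1:ℝ)/((n:ℝ)+1) ≤ 1 := by
              rw [div_le_one (by positivity)]
              linarith [Nat.cast_nonneg (α := ℝ) n]
            nlinarith
          · nlinarith
        have htt : Tendsto (fun n : ℕ => Fb D (z - (z - w0) * (1/((n:ℝ)+1)))) atTop
            (𝓝 (Fb D z)) := by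
          apply (hFcont.continuousAt).tendsto.comp
          have h2 := Filter.Tendsto.const_sub z
            (tendsto_one_div_add_atTop_nhds_zero_nat.const_mul (z - w0))
          simpa [mul_comm] using h2
        exact ge_of_tendsto htt (Filter.Eventually.of_forall fun n => (hmem n).le)
      obtain ⟨w, hwcont, hw0, hwmem, hweq⟩ :=
        ode_exists_inc hFcont hzw0 hz0 (fun x h1 h2 => hpos x h1 h2)
      exact ⟨w, hwcont, hw0, fun t => h0.trans (hwmem t).1, hweq⟩
  obtain ⟨w, hwcont, hw0, hwnn, hweq⟩ := key
  refine ⟨w, hwcont, ⟨fun t _ => hwnn t, fun k t _ =>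
    ((Gk_continuous (D.Γ k) (D.Γ_noAtom k)).comp hwcont).continuousOn.intervalIntegrable,
    fun t ht => ?_⟩, hw0⟩
  rw [hweq t ht, hw0, Fb_integral_eq D hwcont t]
  ring

/-- Uniqueness of workload fluid model solutions. -/
lemma workload_unique {K : ℕ} (D : Data K) {w1 w2 : ℝ → ℝ}
    (h1 : IsWorkloadSol D w1) (h2 : IsWorkloadSol D w2) (h0 : w1 0 = w2 0) :
    ∀ t, 0 ≤ t → w1 t = w2 t := by
  suffices H : ∀ v1 v2 : ℝ → ℝ, IsWorkloadSol D v1 → IsWorkloadSol D v2 → v1 0 = v2 0 →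
      ∀ t, 0 ≤ t → v1 t ≤ v2 t by
    exact fun t ht => le_antisymm (H w1 w2 h1 h2 h0 t ht) (H w2 w1 h2 h1 h0.symm t ht)
  clear h1 h2 h0 w1 w2
  intro w1 w2 h1 h2 h0 t0 ht0
  by_contra hcon
  push_neg at hcon
  obtain ⟨hnn1, hint1, heq1⟩ := h1
  obtain ⟨hnn2, hint2, heq2⟩ := h2
  set d : ℝ → ℝ := fun t => w1 t - w2 t with hd
  have hdint : ∀ k : Fin K, ∀ s t : ℝ, 0 ≤ s → s ≤ t →
      IntervalIntegrable (fun u => Gk (D.Γ k) (w1 u) - Gk (D.Γ k) (w2 u)) volume s t := by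
    intro k s t hs hst
    have ha := (hint1 k t (hs.trans hst)).sub (hint2 k t (hs.trans hst))
    refine ha.mono_set (Set.uIcc_subset_uIcc ?_ ?_)
    · rw [Set.uIcc_of_le (hs.trans hst)]
      exact ⟨hs, hst⟩
    · exact Set.right_mem_uIcc
  have hdform : ∀ t, 0 ≤ t → d t = ∑ k, D.rho k *
      ∫ s in (0:ℝ)..t, (Gk (D.Γ k) (w1 s) - Gk (D.Γ k) (w2 s)) := by
    intro t ht
    have e1 := heq1 t ht
    have e2 := heq2 t ht
    have hsplit : ∀ k ∈ Finset.univ, D.rho k * (∫ s in (0:ℝ)..t,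
        (Gk (D.Γ k) (w1 s) - Gk (D.Γ k) (w2 s))) =
        D.rho k * (∫ s in (0:ℝ)..t, Gk (D.Γ k) (w1 s)) -
        D.rho k * (∫ s in (0:ℝ)..t, Gk (D.Γ k) (w2 s)) := by
      intro k _
      rw [intervalIntegral.integral_sub (hint1 k t ht) (hint2 k t ht)]
      ring
    rw [Finset.sum_congr rfl hsplit, Finset.sum_sub_distrib]
    simp only [hd]
    rw [e1, e2, h0]
    ring
  have hdiff : ∀ s t : ℝ, 0 ≤ s → s ≤ t → d t - d s = ∑ k, D.rho k *
      ∫ u in s..t, (Gk (D.Γ k) (w1 u) - Gk (D.Γ k) (w2 u)) := by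
    intro s t hs hst
    rw [hdform t (hs.trans hst), hdform s hs, ← Finset.sum_sub_distrib]
    apply Finset.sum_congr rfl
    intro k _
    rw [← mul_sub]
    congr 1
    have hadj := intervalIntegral.integral_add_adjacent_intervals
      (hdint k 0 s le_rfl hs) (hdint k s t hs hst)
    linarith
  have hdcont : ContinuousOn d (Set.Icc 0 t0) := by
    have hc : ContinuousOn (fun t => ∑ k, D.rho k * ∫ s in (0:ℝ)..t,
        (Gk (D.Γ k) (w1 s) - Gk (D.Γ k) (w2 s))) (Set.uIcc 0 t0) := by
      apply continuousOn_finset_sum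
      intro k _
      exact continuousOn_const.mul
        (intervalIntegral.continuousOn_primitive_interval' (hdint k 0 t0 le_rfl ht0)
          Set.left_mem_uIcc)
    rw [Set.uIcc_of_le ht0] at hc
    exact hc.congr (fun x hx => hdform x hx.1)
  set Sneg : Set ℝ := Set.Icc 0 t0 ∩ d ⁻¹' Set.Iic 0 with hSneg
  have hScl : IsClosed Sneg :=
    hdcont.preimage_isClosed_of_isClosed isClosed_Icc isClosed_Iic
  have hd0 : d 0 = 0 := by
    simp only [hd]
    rw [h0]
    ring
  have hSne : Sneg.Nonempty := ⟨0, ⟨le_rfl, ht0⟩, by simp [Set.mem_preimage, hd0]⟩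
  have hSbdd : BddAbove Sneg := ⟨t0, fun s hs => hs.1.2⟩
  set s1 := sSup Sneg with hs1
  have hs1mem : s1 ∈ Sneg := hScl.csSup_mem hSne hSbdd
  have hpos0 : 0 < d t0 := sub_pos.2 hcon
  have hs1lt : s1 < t0 := by
    rcases eq_or_lt_of_le hs1mem.1.2 with h | h
    · exfalso
      have h2 : d t0 ≤ 0 := by
        rw [← h]
        exact hs1mem.2
      linarith
    · exact h
  have hdpos : ∀ s, s1 < s → s ≤ t0 → 0 < d s := by
    intro s hss hst
    by_contra hc
    push_neg at hc
    have hmem : s ∈ Sneg := ⟨⟨(hs1mem.1.1).trans hss.le, hst⟩, hc⟩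
    exact absurd (le_csSup hSbdd hmem) (not_le.2 hss)
  have hkey : d t0 - d s1 ≤ 0 := by
    rw [hdiff s1 t0 hs1mem.1.1 hs1lt.le]
    apply Finset.sum_nonpos
    intro k _
    have hI : (∫ u in s1..t0, (Gk (D.Γ k) (w1 u) - Gk (D.Γ k) (w2 u))) ≤ 0 := by
      rw [intervalIntegral.integral_of_le hs1lt.le]
      apply setIntegral_nonpos measurableSet_Ioc
      intro u hu
      have hdu : 0 < d u := hdpos u hu.1 hu.2
      have hlt : w2 u ≤ w1 u := by
        simp only [hd] at hdu
        linarith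
      linarith [Gk_anti (D.Γ k) hlt]
    exact mul_nonpos_of_nonneg_of_nonpos (rho_pos D k).le hI
  have hle : d s1 ≤ 0 := hs1mem.2
  linarith

section MeasureConstruction

lemma Q_eq : Q = Set.Ici (0:ℝ) ×ˢ Set.Ici (0:ℝ) := by
  ext p
  simp [Q, Set.mem_prod, Set.mem_Ici, Prod.le_def]

lemma measurableSet_Q : MeasurableSet Q := by
  rw [Q_eq]
  exact measurableSet_Ici.prod measurableSet_Ici

/-- The diagonal shift map `y ↦ y − (t,t)`. -/
def gmap (t : ℝ) : ℝ × ℝ → ℝ × ℝ := fun y => (y.1 - t, y.2 - t)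

lemma measurable_gmap (t : ℝ) : Measurable (gmap t) :=
  (measurable_fst.sub measurable_const).prodMk (measurable_snd.sub measurable_const)

lemma shiftd_eq (B : Set (ℝ × ℝ)) (u : ℝ) : shiftd B u = gmap u ⁻¹' B ∩ Q := by
  ext y
  simp only [shiftd, shift, Set.mem_inter_iff, Set.mem_preimage, Set.mem_setOf_eq, gmap]
  tauto

lemma measurableSet_shiftd {B : Set (ℝ × ℝ)} (hB : MeasurableSet B) (u : ℝ) :
    MeasurableSet (shiftd B u) := by
  rw [shiftd_eq]
  exact (hB.preimage (measurable_gmap u)).inter measurableSet_Q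

lemma deltaPlus_apply_le (w : ℝ) (S : Set ℝ) : deltaPlus w S ≤ 1 := by
  unfold deltaPlus
  split_ifs
  · exact (measure_mono (Set.subset_univ _)).trans (by simp)
  · simp

lemma prod_deltaPlus_apply {Γ : MeasureTheory.Measure ℝ} [IsProbabilityMeasure Γ] (v : ℝ)
    {S : Set (ℝ × ℝ)} (hS : MeasurableSet S) :
    ((deltaPlus v).prod Γ) S = if 0 < v then Γ {p | (v, p) ∈ S} else 0 := by
  unfold deltaPlus
  split_ifs
  · rw [Measure.dirac_prod, Measure.map_apply measurable_prodMk_left hS]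
    rfl
  · rw [Measure.zero_prod]
    rfl

lemma prod_deltaPlus_le_one {Γ : MeasureTheory.Measure ℝ} [IsProbabilityMeasure Γ] (v : ℝ)
    (S : Set (ℝ × ℝ)) : ((deltaPlus v).prod Γ) S ≤ 1 := by
  refine (measure_mono (Set.subset_univ _)).trans ?_
  rw [← Set.univ_prod_univ, Measure.prod_prod]
  calc deltaPlus v Set.univ * Γ Set.univ ≤ 1 * 1 :=
        mul_le_mul' (deltaPlus_apply_le v _) (by simp)
    _ = 1 := by simp

lemma prod_deltaPlus_ne_top {Γ : MeasureTheory.Measure ℝ} [IsProbabilityMeasure Γ] (v : ℝ)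
    (S : Set (ℝ × ℝ)) : ((deltaPlus v).prod Γ) S ≠ ⊤ :=
  ne_top_of_le_ne_top ENNReal.one_ne_top (prod_deltaPlus_le_one v S)

lemma kern_nonneg (Γ : MeasureTheory.Measure ℝ) (v : ℝ) (S : Set (ℝ × ℝ)) :
    0 ≤ kern Γ v S := ENNReal.toReal_nonneg

lemma kern_le_one {Γ : MeasureTheory.Measure ℝ} [IsProbabilityMeasure Γ] (v : ℝ)
    (S : Set (ℝ × ℝ)) : kern Γ v S ≤ 1 := by
  have := ENNReal.toReal_mono ENNReal.one_ne_top (prod_deltaPlus_le_one (Γ := Γ) v S)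
  simpa [kern] using this

/-- The arrival part of the fluid solution measure. -/
def arr {K : ℕ} (D : Data K) (w : ℝ → ℝ) (t : ℝ) (k : Fin K) :
    MeasureTheory.Measure (ℝ × ℝ) :=
  MeasureTheory.Measure.map (fun sp : ℝ × ℝ => (w sp.1 - (t - sp.1), sp.2 - (t - sp.1)))
    ((((MeasureTheory.volume.restrict (Set.Ioc 0 t))).prod (D.Γ k)).restrict
      {sp : ℝ × ℝ | 0 < w sp.1 ∧ 0 ≤ sp.2})

variable {K : ℕ} (D : Data K)

lemma psi_measurable {w : ℝ → ℝ} (hw : Measurable w) (t : ℝ) :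
    Measurable (fun sp : ℝ × ℝ => (w sp.1 - (t - sp.1), sp.2 - (t - sp.1))) :=
  (((hw.comp measurable_fst).sub (measurable_const.sub measurable_fst)).prodMk
    (measurable_snd.sub (measurable_const.sub measurable_fst)))

lemma Aset_measurable {w : ℝ → ℝ} (hw : Measurable w) :
    MeasurableSet {sp : ℝ × ℝ | 0 < w sp.1 ∧ 0 ≤ sp.2} :=
  ((hw.comp measurable_fst) measurableSet_Ioi).inter (measurable_snd measurableSet_Ici)

lemma kern_eq_section {w : ℝ → ℝ} (hw : Measurable w) (t : ℝ) (k : Fin K)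
    {B : Set (ℝ × ℝ)} (hB : MeasurableSet B) (s : ℝ) :
    ((deltaPlus (w s)).prod (D.Γ k)) (shiftd B (t - s))
      = (D.Γ k) (Prod.mk s ⁻¹'
        (((fun sp : ℝ × ℝ => (w sp.1 - (t - sp.1), sp.2 - (t - sp.1))) ⁻¹' B)
          ∩ {sp : ℝ × ℝ | 0 < w sp.1 ∧ 0 ≤ sp.2})) := by
  rw [prod_deltaPlus_apply (w s) (measurableSet_shiftd hB (t - s))]
  by_cases hws : 0 < w s
  · rw [if_pos hws]
    congr 1
    ext p
    simp only [Set.mem_preimage, Set.mem_inter_iff, Set.mem_setOf_eq, shiftd, shift, Q]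
    constructor
    · rintro ⟨⟨_, hp⟩, hB'⟩
      exact ⟨hB', hws, hp⟩
    · rintro ⟨hB', _, hp⟩
      exact ⟨⟨hws.le, hp⟩, hB'⟩
  · rw [if_neg hws]
    have hempty : (Prod.mk s ⁻¹'
        (((fun sp : ℝ × ℝ => (w sp.1 - (t - sp.1), sp.2 - (t - sp.1))) ⁻¹' B)
          ∩ {sp : ℝ × ℝ | 0 < w sp.1 ∧ 0 ≤ sp.2})) = ∅ := by
      ext p
      simp only [Set.mem_preimage, Set.mem_inter_iff, Set.mem_setOf_eq,
        Set.mem_empty_iff_false, iff_false, not_and]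
      intro _ h
      exact absurd h hws
    rw [hempty, measure_empty]

lemma arr_apply {w : ℝ → ℝ} (hw : Measurable w) (t : ℝ) (k : Fin K)
    {B : Set (ℝ × ℝ)} (hB : MeasurableSet B) :
    arr D w t k B
      = ∫⁻ s in Set.Ioc 0 t, ((deltaPlus (w s)).prod (D.Γ k)) (shiftd B (t - s)) := by
  rw [arr, Measure.map_apply (psi_measurable hw t) hB,
    Measure.restrict_apply (hB.preimage (psi_measurable hw t)),
    Measure.prod_apply ((hB.preimage (psi_measurable hw t)).inter (Aset_measurable hw))]
  exact lintegral_congr fun s => (kern_eq_section D hw t k hB s).symm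

lemma arr_univ_lt_top {w : ℝ → ℝ} (hw : Measurable w) (t : ℝ) (k : Fin K) :
    arr D w t k Set.univ < ⊤ := by
  rw [arr, Measure.map_apply (psi_measurable hw t) MeasurableSet.univ, Set.preimage_univ,
    Measure.restrict_apply_univ]
  refine lt_of_le_of_lt (measure_mono (Set.subset_univ _)) ?_
  rw [← Set.univ_prod_univ, Measure.prod_prod, Measure.restrict_apply_univ, Real.volume_Ioc,
    measure_univ, mul_one]
  exact ENNReal.ofReal_lt_top

lemma kern_measurable {w : ℝ → ℝ} (hw : Measurable w) (t : ℝ) (k : Fin K)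
    {B : Set (ℝ × ℝ)} (hB : MeasurableSet B) :
    Measurable (fun s => kern (D.Γ k) (w s) (shiftd B (t - s))) := by
  have hE : MeasurableSet
      (((fun sp : ℝ × ℝ => (w sp.1 - (t - sp.1), sp.2 - (t - sp.1))) ⁻¹' B)
        ∩ {sp : ℝ × ℝ | 0 < w sp.1 ∧ 0 ≤ sp.2}) :=
    (hB.preimage (psi_measurable hw t)).inter (Aset_measurable hw)
  have h1 : Measurable fun s => (D.Γ k) (Prod.mk s ⁻¹'
      (((fun sp : ℝ × ℝ => (w sp.1 - (t - sp.1), sp.2 - (t - sp.1))) ⁻¹' B)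
        ∩ {sp : ℝ × ℝ | 0 < w sp.1 ∧ 0 ≤ sp.2})) :=
    measurable_measure_prodMk_left hE
  have h2 : (fun s => kern (D.Γ k) (w s) (shiftd B (t - s)))
      = fun s => ((D.Γ k) (Prod.mk s ⁻¹'
      (((fun sp : ℝ × ℝ => (w sp.1 - (t - sp.1), sp.2 - (t - sp.1))) ⁻¹' B)
        ∩ {sp : ℝ × ℝ | 0 < w sp.1 ∧ 0 ≤ sp.2}))).toReal := by
    funext s
    rw [kern, kern_eq_section D hw t k hB s]
  rw [h2]
  exact ENNReal.measurable_toReal.comp h1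

lemma kern_intervalIntegrable {w : ℝ → ℝ} (hw : Measurable w) {t : ℝ} (ht : 0 ≤ t) (k : Fin K)
    {B : Set (ℝ × ℝ)} (hB : MeasurableSet B) :
    IntervalIntegrable (fun s => kern (D.Γ k) (w s) (shiftd B (t - s))) volume 0 t := by
  rw [intervalIntegrable_iff_integrableOn_Ioc_of_le ht]
  refine ⟨((kern_measurable D hw t k hB).aestronglyMeasurable).restrict, ?_⟩
  apply HasFiniteIntegral.restrict_of_bounded (C := 1) measure_Ioc_lt_top
  apply Filter.Eventually.of_forall
  intro s
  rw [Real.norm_eq_abs, abs_of_nonneg (kern_nonneg _ _ _)]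
  exact kern_le_one _ _

/-- The fluid model solution constructed from initial data and workload. -/
def zeta (ϑ : Fin K → MeasureTheory.Measure (ℝ × ℝ)) (w : ℝ → ℝ) (t : ℝ) (k : Fin K) :
    MeasureTheory.Measure (ℝ × ℝ) :=
  (((ϑ k).map (gmap t)) + ENNReal.ofReal (D.lam k) • arr D w t k).restrict Q

end MeasureConstruction

section ZetaLemmas
variable {K : ℕ} (D : Data K) (ϑ : Fin K → MeasureTheory.Measure (ℝ × ℝ))

lemma zeta_finite (hfin : ∀ k, IsFiniteMeasure (ϑ k)) {w : ℝ → ℝ} (hw : Measurable w)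
    (t : ℝ) (k : Fin K) : IsFiniteMeasure (zeta D ϑ w t k) := by
  haveI := hfin k
  constructor
  rw [zeta, Measure.restrict_apply_univ]
  have h1 : ((ϑ k).map (gmap t)) Set.univ < ⊤ := by
    rw [Measure.map_apply (measurable_gmap t) MeasurableSet.univ, Set.preimage_univ]
    exact measure_lt_top _ _
  have h2 : (ENNReal.ofReal (D.lam k) • arr D w t k) Set.univ < ⊤ := by
    rw [Measure.smul_apply, smul_eq_mul]
    exact ENNReal.mul_lt_top ENNReal.ofReal_lt_top (arr_univ_lt_top D hw t k)
  refine lt_of_le_of_lt (measure_mono (Set.subset_univ _)) ?_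
  rw [Measure.add_apply]
  exact ENNReal.add_lt_top.2 ⟨h1, h2⟩

lemma zeta_null (w : ℝ → ℝ) (t : ℝ) (k : Fin K) : zeta D ϑ w t k Qᶜ = 0 := by
  rw [zeta, Measure.restrict_apply measurableSet_Q.compl, Set.compl_inter_self, measure_empty]

lemma zeta_zero (hQc : ∀ k, ϑ k Qᶜ = 0) (w : ℝ → ℝ) (k : Fin K) : zeta D ϑ w 0 k = ϑ k := by
  have hg0 : gmap 0 = id := by
    funext y
    simp [gmap]
  have harr0 : arr D w 0 k = 0 := by
    rw [arr, Set.Ioc_self, Measure.restrict_empty, Measure.zero_prod, Measure.restrict_zero,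
      Measure.map_zero]
  rw [zeta, harr0, smul_zero, add_zero, hg0, Measure.map_id]
  exact Measure.restrict_eq_self_of_ae_mem (ae_iff.2 (hQc k))

lemma zeta_apply (hfin : ∀ k, IsFiniteMeasure (ϑ k)) (hQc : ∀ k, ϑ k Qᶜ = 0)
    {w : ℝ → ℝ} (hw : Measurable w) {t : ℝ} (ht : 0 ≤ t) (k : Fin K)
    {B : Set (ℝ × ℝ)} (hBQ : B ⊆ Q) (hB : MeasurableSet B) :
    zeta D ϑ w t k B = ϑ k (shiftd B t) + ENNReal.ofReal (D.lam k *
      ∫ s in (0:ℝ)..t, kern (D.Γ k) (w s) (shiftd B (t - s))) := by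
  haveI := hfin k
  rw [zeta, Measure.restrict_apply hB, Set.inter_eq_self_of_subset_left hBQ,
    Measure.add_apply]
  congr 1
  · rw [Measure.map_apply (measurable_gmap t) hB, shiftd_eq]
    have hsplit := measure_inter_add_diff (μ := ϑ k) (gmap t ⁻¹' B) measurableSet_Q
    have hnull : ϑ k (gmap t ⁻¹' B \ Q) = 0 :=
      measure_mono_null (fun x hx => hx.2) (hQc k)
    rw [← hsplit, hnull, add_zero]
  · rw [Measure.smul_apply, smul_eq_mul, arr_apply D hw t k hB]
    have hint : IntegrableOn (fun s => kern (D.Γ k) (w s) (shiftd B (t - s)))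
        (Set.Ioc 0 t) volume := by
      have h := kern_intervalIntegrable D hw ht k hB
      rwa [intervalIntegrable_iff_integrableOn_Ioc_of_le ht] at h
    rw [intervalIntegral.integral_of_le ht, ENNReal.ofReal_mul (D.lam_pos k).le,
      MeasureTheory.ofReal_integral_eq_lintegral_ofReal hint
        (Filter.Eventually.of_forall fun s => kern_nonneg _ _ _)]
    congr 1
    apply lintegral_congr
    intro s
    rw [kern]
    exact (ENNReal.ofReal_toReal (prod_deltaPlus_ne_top (w s) _)).symm

end ZetaLemmas

/-- For every `ϑ ∈ I` there exists exactly one fluid model solution with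
initial measure `ϑ` (unique on `[0,∞)`). -/
theorem fluid_exists_unique {K : ℕ} (D : Data K)
    (ϑ : Fin K → MeasureTheory.Measure (ℝ × ℝ)) (hϑ : MemI D ϑ) :
    (∃ ζ : ℝ → Fin K → MeasureTheory.Measure (ℝ × ℝ), IsFluidSol D ϑ ζ) ∧
    (∀ ζ₁ ζ₂ : ℝ → Fin K → MeasureTheory.Measure (ℝ × ℝ),
      IsFluidSol D ϑ ζ₁ → IsFluidSol D ϑ ζ₂ →
      ∀ t : ℝ, 0 ≤ t → ∀ k, ζ₁ t k = ζ₂ t k) := by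
  obtain ⟨hfin, hQc, hC, hbdd, hG⟩ := hϑ
  have h0 : 0 ≤ wMeas ϑ := by
    rcases Set.eq_empty_or_nonempty
        {x : ℝ | 0 ≤ x ∧ 0 < ∑ k, ϑ k (Set.Ici x ×ˢ Set.Ici (0:ℝ))} with h | h
    · rw [wMeas, h, Real.sSup_empty]
    · obtain ⟨x, hx⟩ := h
      exact hx.1.trans (le_csSup hbdd hx)
  obtain ⟨w, hwc, hwsol, hw0⟩ := exists_workload D (wMeas ϑ) h0
  have hwm : Measurable w := hwc.measurable
  constructor
  · exact ⟨zeta D ϑ w, w, hwsol, hw0, fun t ht k =>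
      ⟨zeta_finite D ϑ hfin hwm t k, zeta_null D ϑ w t k⟩, zeta_zero D ϑ hQc w,
      fun k B hBQ hB t ht => ⟨kern_intervalIntegrable D hwm ht k hB,
        zeta_apply D ϑ hfin hQc hwm ht k hBQ hB⟩⟩
  · rintro ζ1 ζ2 ⟨v1, hv1sol, hv10, hfin1, _, hf1⟩ ⟨v2, hv2sol, hv20, hfin2, _, hf2⟩ t ht k
    have hv := workload_unique D hv1sol hv2sol (hv10.trans hv20.symm)
    apply Measure.ext
    intro S hS
    have hn1 : ζ1 t k (S \ Q) = 0 :=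
      measure_mono_null (fun x hx => hx.2) (hfin1 t ht k).2
    have hn2 : ζ2 t k (S \ Q) = 0 :=
      measure_mono_null (fun x hx => hx.2) (hfin2 t ht k).2
    have hsplit1 := measure_inter_add_diff (μ := ζ1 t k) S measurableSet_Q
    have hsplit2 := measure_inter_add_diff (μ := ζ2 t k) S measurableSet_Q
    have e1 := (hf1 k (S ∩ Q) Set.inter_subset_right (hS.inter measurableSet_Q) t ht).2
    have e2 := (hf2 k (S ∩ Q) Set.inter_subset_right (hS.inter measurableSet_Q) t ht).2
    have hIeq : (∫ s in (0:ℝ)..t, kern (D.Γ k) (v1 s) (shiftd (S ∩ Q) (t - s)))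
        = ∫ s in (0:ℝ)..t, kern (D.Γ k) (v2 s) (shiftd (S ∩ Q) (t - s)) := by
      apply intervalIntegral.integral_congr
      intro s hs
      rw [Set.uIcc_of_le ht] at hs
      simp only [hv s hs.1]
    rw [← hsplit1, ← hsplit2, hn1, hn2, e1, e2, hIeq]


end OverloadedFIFO
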